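/- Let u = (-1, 0) and w = (1, 0) in the Euclidean plane ℝ², and let H = {(x, y) ∈ ℝ² | y > 0} be the open upper halfplane. Then the function q(v) = π − ∠uvw, where ∠uvw denotes the Euclidean angle at v between the rays from v to u and from v to w, is quasiconvex on H: each lower level set q^{≤λ} is the intersection with H of a closed disk whose boundary circle passes through u and w. -/

import Mathlib

open Real EuclideanGeometry

open Real EuclideanGeometry

lemma le_of_sq_le' (a b : ℝ) (h : a^2 ≤ b^2) (hb : 0 ≤ b) : a ≤ b := by nlinarith

lemma sq_ineq (D P y cl sl : ℝ) (hy : 0 < y) (hsl : 0 < sl)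
    (hpyth : cl^2 + sl^2 = 1) (hP2 : P^2 = D^2 + 4*y^2) (hP0 : 0 < P) :
    D ≤ -(cl * P) ↔ D * sl + 2*y*cl ≤ 0 := by
  have h4 : cl^2*P^2 = cl^2*D^2 + 4*y^2*cl^2 := by rw [hP2]; ring
  have h5 : D^2*sl^2 = D^2 - D^2*cl^2 := by
    have hc2 : sl^2 = 1 - cl^2 := by linarith
    rw [hc2]; ring
  constructor
  · intro h
    rcases le_or_gt cl 0 with hc | hc
    · rcases le_or_gt D 0 with hD | hD
      · nlinarith [mul_nonneg hy.le (neg_nonneg.mpr hc), mul_nonpos_of_nonpos_of_nonneg hD hsl.le]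
      · have hr : 0 ≤ -(cl*P) := by nlinarith
        have hsq : D^2 ≤ cl^2*P^2 := by nlinarith [mul_le_mul h h hD.le hr]
        have h6 : (D*sl)^2 ≤ (2*y*(-cl))^2 := by nlinarith
        have h7 : D*sl ≤ 2*y*(-cl) := le_of_sq_le' _ _ h6 (by nlinarith)
        linarith
    · have hD : D < 0 := lt_of_le_of_lt h (by nlinarith)
      have h' : cl*P ≤ -D := by linarith
      have hsq : cl^2*P^2 ≤ D^2 := by nlinarith [mul_le_mul h' h' (by positivity) (by linarith)]
      have h6 : (2*y*cl)^2 ≤ ((-D)*sl)^2 := by nlinarith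
      have h7 : 2*y*cl ≤ (-D)*sl := le_of_sq_le' _ _ h6 (mul_nonneg (by linarith) hsl.le)
      linarith
  · intro h
    rcases le_or_gt cl 0 with hc | hc
    · rcases le_or_gt D 0 with hD | hD
      · nlinarith [mul_nonneg (neg_nonneg.mpr hc) hP0.le]
      · have h' : D*sl ≤ 2*y*(-cl) := by linarith
        have hsq : (D*sl)^2 ≤ (2*y*(-cl))^2 := by
          nlinarith [mul_le_mul h' h' (by positivity) (by nlinarith)]
        have h7 : D ≤ (-cl)*P := le_of_sq_le' _ _ (by nlinarith) (by nlinarith [mul_nonneg (neg_nonneg.mpr hc) hP0.le])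
        linarith [h7]
    · have hD : D < 0 := by nlinarith
      have h' : 2*y*cl ≤ (-D)*sl := by linarith
      have hsq : (2*y*cl)^2 ≤ ((-D)*sl)^2 := by
        nlinarith [mul_le_mul h' h' (by positivity) (mul_nonneg (by linarith) hsl.le)]
      have h7 : cl*P ≤ -D := le_of_sq_le' _ _ (by nlinarith) (by linarith)
      linarith

lemma disk_iff (x y k sl cl : ℝ) (hsl : 0 < sl) (hcl : cl = k * sl) :
    (x^2 + (y + k)^2 ≤ 1 + k^2) ↔ (x^2+y^2-1)*sl + 2*y*cl ≤ 0 := by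
  subst hcl
  constructor <;> intro h
  · have hE : x^2+y^2-1+2*y*k ≤ 0 := by nlinarith
    nlinarith [mul_nonpos_of_nonpos_of_nonneg hE hsl.le]
  · have h2 : (x^2+y^2-1+2*y*k)*sl ≤ 0 := by nlinarith
    have hE : x^2+y^2-1+2*y*k ≤ 0 := by
      by_contra hE
      push_neg at hE
      nlinarith [mul_pos hE hsl]
    nlinarith

lemma level_iff_aux (u w v c : EuclideanSpace ℝ (Fin 2)) (l : ℝ)
    (hu0 : u 0 = -1) (hu1 : u 1 = 0) (hw0 : w 0 = 1) (hw1 : w 1 = 0)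
    (hl0 : 0 < l) (hlpi : l < π) (hv : 0 < v 1)
    (hc0 : c 0 = 0) (hc1 : c 1 = -(Real.cos l / Real.sin l)) :
    π - ∠ u v w ≤ l ↔ dist v c ≤ 1 / Real.sin l := by
  have hsl : 0 < Real.sin l := Real.sin_pos_of_pos_of_lt_pi hl0 hlpi
  set x := v 0 with hx
  set y := v 1 with hy
  set cl := Real.cos l with hcl
  set sl := Real.sin l with hsl'
  -- step 1: reduce to cosine inequality
  have hang : ∠ u v w = InnerProductGeometry.angle (u - v) (w - v) := by
    rw [EuclideanGeometry.angle]; simp [vsub_eq_sub]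
  have hmem1 : ∠ u v w ∈ Set.Icc 0 π := ⟨angle_nonneg _ _ _, angle_le_pi _ _ _⟩
  have hmem2 : π - l ∈ Set.Icc 0 π := ⟨by linarith, by linarith [hl0]⟩
  have step1 : (π - ∠ u v w ≤ l) ↔ Real.cos (∠ u v w) ≤ Real.cos (π - l) := by
    rw [Real.strictAntiOn_cos.le_iff_ge hmem1 hmem2]
    constructor <;> intro h <;> linarith
  rw [Real.cos_pi_sub] at step1
  -- step 2: compute cosine
  have hi : (inner ℝ (u - v) (w - v) : ℝ) = x^2 + y^2 - 1 := by
    simp [PiLp.inner_apply, Fin.sum_univ_two, RCLike.inner_apply, PiLp.sub_apply,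
      hu0, hu1, hw0, hw1]
    ring
  have hA2 : ‖u - v‖^2 = (x+1)^2 + y^2 := by
    rw [EuclideanSpace.norm_eq, Real.sq_sqrt (by positivity)]
    simp [Fin.sum_univ_two, Real.norm_eq_abs, sq_abs, PiLp.sub_apply, hu0, hu1]
    ring
  have hB2 : ‖w - v‖^2 = (x-1)^2 + y^2 := by
    rw [EuclideanSpace.norm_eq, Real.sq_sqrt (by positivity)]
    simp [Fin.sum_univ_two, Real.norm_eq_abs, sq_abs, PiLp.sub_apply, hw0, hw1]
    ring
  set P := ‖u - v‖ * ‖w - v‖ with hP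
  have hP2 : P^2 = (x^2+y^2-1)^2 + 4*y^2 := by rw [hP, mul_pow, hA2, hB2]; ring
  have hPnn : 0 ≤ P := mul_nonneg (norm_nonneg _) (norm_nonneg _)
  have hPsq : 0 < P^2 := by rw [hP2]; nlinarith [sq_nonneg (x^2+y^2-1)]
  have hP0 : 0 < P := by nlinarith
  have hcos : Real.cos (∠ u v w) = (x^2 + y^2 - 1) / P := by
    rw [hang, InnerProductGeometry.cos_angle, hi, hP]
  have step2 : (Real.cos (∠ u v w) ≤ -cl) ↔ (x^2+y^2-1 ≤ -(cl * P)) := by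
    rw [hcos, div_le_iff₀ hP0, neg_mul]
  -- step 3: core algebraic equivalence
  have hpyth : cl^2 + sl^2 = 1 := by rw [hcl, hsl']; exact Real.cos_sq_add_sin_sq l
  have step3 : (x^2+y^2-1 ≤ -(cl * P)) ↔ (x^2+y^2-1) * sl + 2*y*cl ≤ 0 :=
    sq_ineq (x^2+y^2-1) P y cl sl hv hsl hpyth hP2 hP0
  -- step 4: the disk condition
  have hd : dist v c = Real.sqrt ((x - c 0)^2 + (y - c 1)^2) := by
    simp [EuclideanSpace.dist_eq, Fin.sum_univ_two, Real.dist_eq, sq_abs, hx, hy]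
  have hd2 : (dist v c)^2 = x^2 + (y + cl/sl)^2 := by
    rw [hd, Real.sq_sqrt (by positivity), hc0, hc1]
    ring
  have step4 : (dist v c ≤ 1/sl) ↔ (x^2+y^2-1) * sl + 2*y*cl ≤ 0 := by
    have hiff : dist v c ≤ 1/sl ↔ (dist v c)^2 ≤ (1/sl)^2 :=
      ⟨fun h => pow_le_pow_left₀ dist_nonneg h 2, fun h => le_of_sq_le' _ _ h (by positivity)⟩
    have h1sl : (1/sl)^2 = 1 + (cl/sl)^2 := by
      field_simp
      linarith
    rw [hiff, hd2, h1sl]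
    exact disk_iff x y (cl/sl) sl cl hsl (div_mul_cancel₀ cl (ne_of_gt hsl)).symm
  rw [step1, step2, step3, ← step4]

open Real EuclideanGeometry in
/-- The complementary angle function `q(v) = π − ∠ u v w`, for `u = (-1,0)` and `w = (1,0)`,
is quasiconvex on the open upper halfplane: each lower level set `q ≤ λ` (for `0 < λ < π`)
is the intersection with the halfplane of a closed disk whose boundary circle passes
through `u` and `w`. -/
theorem quasiconvexOn_complementary_angle
    (u w : EuclideanSpace ℝ (Fin 2))
    (hu0 : u 0 = -1) (hu1 : u 1 = 0) (hw0 : w 0 = 1) (hw1 : w 1 = 0)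
    (H : Set (EuclideanSpace ℝ (Fin 2))) (hH : H = {v | 0 < v 1})
    (q : EuclideanSpace ℝ (Fin 2) → ℝ)
    (hq : ∀ v, q v = π - ∠ u v w) :
    QuasiconvexOn ℝ H q ∧
      ∀ l ∈ Set.Ioo 0 π, ∃ c : EuclideanSpace ℝ (Fin 2), ∃ r : ℝ,
        dist u c = r ∧ dist w c = r ∧
        {v ∈ H | q v ≤ l} = H ∩ Metric.closedBall c r := by
  have hHconv : Convex ℝ H := by
    rw [hH]
    exact convex_halfSpace_gt ⟨fun _ _ => rfl, fun _ _ => rfl⟩ 0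
  have main : ∀ l ∈ Set.Ioo (0:ℝ) π, ∃ c : EuclideanSpace ℝ (Fin 2), ∃ r : ℝ,
      dist u c = r ∧ dist w c = r ∧ {v ∈ H | q v ≤ l} = H ∩ Metric.closedBall c r := by
    rintro l ⟨hl0, hlpi⟩
    have hsl : 0 < Real.sin l := Real.sin_pos_of_pos_of_lt_pi hl0 hlpi
    set c : EuclideanSpace ℝ (Fin 2) :=
      (WithLp.equiv 2 (Fin 2 → ℝ)).symm ![0, -(Real.cos l / Real.sin l)] with hc
    have hc0 : c 0 = 0 := rfl
    have hc1 : c 1 = -(Real.cos l / Real.sin l) := rfl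
    have hdu : dist u c = 1 / Real.sin l := by
      have hd : dist u c = Real.sqrt ((u 0 - c 0)^2 + (u 1 - c 1)^2) := by
        simp [EuclideanSpace.dist_eq, Fin.sum_univ_two, Real.dist_eq, sq_abs]
      rw [hd, hu0, hu1, hc0, hc1,
        show (-1 - (0:ℝ))^2 + (0 - -(Real.cos l / Real.sin l))^2 = (1/Real.sin l)^2 by
          field_simp
          linear_combination sin_sq_add_cos_sq l]
      exact Real.sqrt_sq (by positivity)
    have hdw : dist w c = 1 / Real.sin l := by
      have hd : dist w c = Real.sqrt ((w 0 - c 0)^2 + (w 1 - c 1)^2) := by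
        simp [EuclideanSpace.dist_eq, Fin.sum_univ_two, Real.dist_eq, sq_abs]
      rw [hd, hw0, hw1, hc0, hc1,
        show (1 - (0:ℝ))^2 + (0 - -(Real.cos l / Real.sin l))^2 = (1/Real.sin l)^2 by
          field_simp
          linear_combination sin_sq_add_cos_sq l]
      exact Real.sqrt_sq (by positivity)
    refine ⟨c, 1 / Real.sin l, hdu, hdw, ?_⟩
    ext v
    constructor
    · rintro ⟨hvH, hql⟩
      have hv1 : 0 < v 1 := by rw [hH] at hvH; exact hvH
      refine ⟨hvH, ?_⟩
      rw [Metric.mem_closedBall]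
      exact (level_iff_aux u w v c l hu0 hu1 hw0 hw1 hl0 hlpi hv1 hc0 hc1).mp
        (by rwa [hq] at hql)
    · rintro ⟨hvH, hball⟩
      have hv1 : 0 < v 1 := by rw [hH] at hvH; exact hvH
      refine ⟨hvH, ?_⟩
      rw [hq]
      exact (level_iff_aux u w v c l hu0 hu1 hw0 hw1 hl0 hlpi hv1 hc0 hc1).mpr
        (Metric.mem_closedBall.mp hball)
  refine ⟨?_, main⟩
  intro l
  rcases le_or_gt l 0 with hl | hl0
  · have hempty : {x ∈ H | q x ≤ l} = ∅ := by
      ext v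
      simp only [Set.mem_sep_iff, Set.mem_empty_iff_false, iff_false, not_and]
      intro hvH hql
      have hv1 : 0 < v 1 := by rw [hH] at hvH; exact hvH
      have hpi : ∠ u v w = π := by
        have h1 := angle_le_pi u v w
        rw [hq] at hql
        linarith
      obtain ⟨a, b, ha, hb, hab, hv⟩ :=
        (EuclideanGeometry.angle_eq_pi_iff_sbtw.mp hpi).wbtw.mem_segment
      have : v 1 = a * u 1 + b * w 1 := by rw [← hv]; rfl
      rw [hu1, hw1] at this
      simp at this
      linarith
    rw [hempty]
    exact convex_empty
  · rcases lt_or_ge l π with hlpi | hlpi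
    · obtain ⟨c, r, _, _, hset⟩ := main l ⟨hl0, hlpi⟩
      rw [hset]
      exact hHconv.inter (convex_closedBall c r)
    · have hfull : {x ∈ H | q x ≤ l} = H := by
        ext v
        simp only [Set.mem_sep_iff, and_iff_left_iff_imp]
        intro _
        rw [hq]
        linarith [angle_nonneg u v w]
      rw [hfull]
      exact hHconv
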